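/- arXiv:1202.5822 — 2 statements merged into one kernel-verified Lean document; each statement's English description precedes it below -/
import Mathlib

section
/- Let $k \geq 1$ and $\gamma > 0$ with $e^{2\gamma(k+1)} \geq 2k^2$. Then for all integers $1 \leq q \leq k$, the coefficient $C_q = \frac{q^2}{q^2 - e^{2\gamma(k+1)}} \prod_{j \in \{1,\ldots,k\}\setminus\{q\}} \frac{q^2}{q^2 - j^2}$ satisfies $|C_q| \leq \sqrt{2}\, k^{3/2} e^{2k(1 + \log(\eta)/2 - \gamma)}$, where $\eta = \max_{\lambda \in [0,1)} \frac{\lambda^2}{(1+\lambda)^{1+\lambda}(1-\lambda)^{1-\lambda}}$. -/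
open Finset Real Nat


lemma fact_lb (n : ℕ) (hn : 1 ≤ n) :
    Real.sqrt π * (Real.sqrt (2*n) * ((n:ℝ)/Real.exp 1)^n) ≤ n ! := by
  have h1 : Real.sqrt π ≤ Stirling.stirlingSeq n := by
    obtain ⟨m, rfl⟩ := Nat.exists_eq_add_of_le hn
    have ha := Stirling.stirlingSeq'_antitone
    have ht : Filter.Tendsto (Stirling.stirlingSeq ∘ Nat.succ) Filter.atTop (nhds (Real.sqrt π)) :=
      Stirling.tendsto_stirlingSeq_sqrt_pi.comp (Filter.tendsto_add_atTop_nat 1)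
    have := ha.le_of_tendsto ht m
    simpa [Nat.succ_eq_add_one, Nat.add_comm] using this
  have hpos : 0 < Real.sqrt (2*n) * ((n:ℝ)/Real.exp 1)^n := by
    have : (0:ℝ) < n := by exact_mod_cast hn
    positivity
  have := mul_le_mul_of_nonneg_right h1 hpos.le
  rw [Stirling.stirlingSeq, div_mul_cancel₀] at this
  · linarith
  · exact hpos.ne'

lemma fact_lb' (n : ℕ) (hn : 1 ≤ n) :
    Real.sqrt π * (Real.sqrt (2*n) * (n:ℝ)^n) ≤ (n ! : ℝ) * (Real.exp 1)^n := by
  have h := fact_lb n hn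
  have he : (0:ℝ) < (Real.exp 1)^n := by positivity
  have := mul_le_mul_of_nonneg_right h he.le
  calc Real.sqrt π * (Real.sqrt (2*n) * (n:ℝ)^n)
      = Real.sqrt π * (Real.sqrt (2*n) * ((n:ℝ)/Real.exp 1)^n) * (Real.exp 1)^n := by
        rw [div_pow]
        field_simp
    _ ≤ (n ! : ℝ) * (Real.exp 1)^n := this

lemma keypow (k q : ℕ) (hq1 : 1 ≤ q) (hqk : q < k) (η : ℝ)
    (hfη : ((q:ℝ)/k) ^ 2 / ((1 + (q:ℝ)/k) ^ (1 + (q:ℝ)/k) * (1 - (q:ℝ)/k) ^ (1 - (q:ℝ)/k)) ≤ η) :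
    (q:ℝ)^(2*k) ≤ η^k * (((k-q:ℕ):ℝ)^((k-q:ℕ)) * ((k+q:ℕ):ℝ)^((k+q:ℕ))) := by
  have hk0 : (0:ℝ) < k := by
    have : 0 < k := by omega
    exact_mod_cast this
  set l : ℝ := (q:ℝ)/k with hl
  have hl0 : 0 ≤ l := by positivity
  have hl1 : l < 1 := by
    rw [hl, div_lt_one hk0]
    exact_mod_cast hqk
  have h1p : (0:ℝ) < 1 + l := by linarith
  have h1m : (0:ℝ) < 1 - l := by linarith
  have hD : 0 < (1+l)^(1+l) * (1-l)^(1-l) :=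
    mul_pos (Real.rpow_pos_of_pos h1p _) (Real.rpow_pos_of_pos h1m _)
  rw [div_le_iff₀ hD] at hfη
  have hstep : (l^2)^k ≤ (η * ((1+l)^(1+l)*(1-l)^(1-l)))^k :=
    pow_le_pow_left₀ (sq_nonneg l) hfη k
  have i1 : ((1+l)^(1+l))^(k:ℕ) = (1+l)^((1+l)*(k:ℝ)) := by
    rw [← Real.rpow_natCast ((1+l)^(1+l)) k, ← Real.rpow_mul h1p.le]
  have i2 : ((1-l)^(1-l))^(k:ℕ) = (1-l)^((1-l)*(k:ℝ)) := by
    rw [← Real.rpow_natCast ((1-l)^(1-l)) k, ← Real.rpow_mul h1m.le]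
  have ik : (k:ℝ)^(2*k:ℕ) = (k:ℝ)^((1+l)*(k:ℝ)) * (k:ℝ)^((1-l)*(k:ℝ)) := by
    rw [← Real.rpow_natCast (k:ℝ) (2*k), ← Real.rpow_add hk0]
    congr 1
    push_cast
    ring
  have m1 : (1+l)^((1+l)*(k:ℝ)) * (k:ℝ)^((1+l)*(k:ℝ)) = ((k+q:ℕ):ℝ)^((k+q:ℕ)) := by
    rw [← Real.mul_rpow h1p.le hk0.le]
    have he : ((1+l)*(k:ℝ)) = ((k+q:ℕ):ℝ) := by
      rw [hl]
      push_cast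
      field_simp
    rw [show (1+l)*(k:ℝ) = ((k+q:ℕ):ℝ) from he, Real.rpow_natCast]
  have m2 : (1-l)^((1-l)*(k:ℝ)) * (k:ℝ)^((1-l)*(k:ℝ)) = ((k-q:ℕ):ℝ)^((k-q:ℕ)) := by
    rw [← Real.mul_rpow h1m.le hk0.le]
    have he : ((1-l)*(k:ℝ)) = ((k-q:ℕ):ℝ) := by
      rw [hl]
      push_cast [Nat.cast_sub hqk.le]
      field_simp
    rw [show (1-l)*(k:ℝ) = ((k-q:ℕ):ℝ) from he, Real.rpow_natCast]
  have lq : l * (k:ℝ) = (q:ℝ) := div_mul_cancel₀ _ hk0.ne'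
  calc (q:ℝ)^(2*k) = (l^2)^k * (k:ℝ)^(2*k) := by
        rw [← pow_mul, ← mul_pow, lq]
    _ ≤ (η * ((1+l)^(1+l)*(1-l)^(1-l)))^k * (k:ℝ)^(2*k) :=
        mul_le_mul_of_nonneg_right hstep (by positivity)
    _ = η^k * (((k-q:ℕ):ℝ)^((k-q:ℕ)) * ((k+q:ℕ):ℝ)^((k+q:ℕ))) := by
        rw [mul_pow, mul_pow, i1, i2, ik, ← m1, ← m2]
        ring


lemma auxA (c : ℕ) : ∀ m : ℕ, c ! * ∏ i ∈ Icc 1 m, (c + i) = (c + m)! := by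
  intro m
  induction m with
  | zero => simp
  | succ m ih =>
    rw [Finset.prod_Icc_succ_top (Nat.le_add_left 1 m), ← mul_assoc, ih, ← Nat.add_assoc,
      Nat.factorial_succ]
    ring

lemma auxB (m : ℕ) : ∏ i ∈ Icc 1 m, i = m ! := by simpa using auxA 0 m

lemma prodAbs (k q : ℕ) (hq1 : 1 ≤ q) (hqk : q ≤ k) :
    ∏ j ∈ (Icc 1 k).erase q, |(q:ℝ)^2 - (j:ℝ)^2| =
      (((k-q)! * (k+q)! : ℕ) : ℝ) / (2 * (q:ℝ)^2) := by
  have hsplit : (Icc 1 k).erase q = Icc 1 (q-1) ∪ Icc (q+1) k := by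
    ext j; simp only [Finset.mem_erase, Finset.mem_Icc, Finset.mem_union]; omega
  have hdisj : Disjoint (Icc 1 (q-1)) (Icc (q+1) k) := by
    rw [Finset.disjoint_left]; intro j hj hj'
    simp only [Finset.mem_Icc] at hj hj'; omega
  rw [hsplit, Finset.prod_union hdisj]
  -- left part
  have h1 : ∏ j ∈ Icc 1 (q-1), |(q:ℝ)^2-(j:ℝ)^2| =
      ((∏ j ∈ Icc 1 (q-1), ((q-j)*(q+j)) : ℕ) : ℝ) := by
    rw [Nat.cast_prod]
    refine Finset.prod_congr rfl fun j hj => ?_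
    simp only [Finset.mem_Icc] at hj
    have hjq : j < q := by omega
    have hjr : (j:ℝ) < q := by exact_mod_cast hjq
    rw [Nat.cast_mul, Nat.cast_sub hjq.le, Nat.cast_add, abs_of_pos (by nlinarith)]
    ring
  have h1a : ∏ j ∈ Icc 1 (q-1), (q-j) = (q-1)! := by
    rw [← auxB (q-1)]
    refine Finset.prod_nbij' (fun j => q - j) (fun i => q - i) ?_ ?_ ?_ ?_ ?_ <;>
      (intro a ha; simp only [Finset.mem_Icc] at *; try omega)
  have h1b : q ! * ∏ j ∈ Icc 1 (q-1), (q+j) = (2*q-1)! := by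
    have := auxA q (q-1)
    rwa [show q + (q-1) = 2*q-1 by omega] at this
  -- right part
  have h2 : ∏ j ∈ Icc (q+1) k, |(q:ℝ)^2-(j:ℝ)^2| =
      ((∏ j ∈ Icc (q+1) k, ((j-q)*(q+j)) : ℕ) : ℝ) := by
    rw [Nat.cast_prod]
    refine Finset.prod_congr rfl fun j hj => ?_
    simp only [Finset.mem_Icc] at hj
    have hjq : q < j := by omega
    have hjr : (q:ℝ) < j := by exact_mod_cast hjq
    rw [Nat.cast_mul, Nat.cast_sub hjq.le, Nat.cast_add, abs_of_neg (by nlinarith)]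
    ring
  have h2a : ∏ j ∈ Icc (q+1) k, (j-q) = (k-q)! := by
    rw [← auxB (k-q)]
    refine Finset.prod_nbij' (fun j => j - q) (fun i => q + i) ?_ ?_ ?_ ?_ ?_ <;>
      (intro a ha; simp only [Finset.mem_Icc] at *; try omega)
  have h2b : (2*q)! * ∏ j ∈ Icc (q+1) k, (q+j) = (k+q)! := by
    have ha := auxA (2*q) (k-q)
    rw [show 2*q + (k-q) = k+q by omega] at ha
    rw [← ha]
    congr 1
    refine Finset.prod_nbij' (fun j => j - q) (fun i => q + i) ?_ ?_ ?_ ?_ ?_ <;>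
      (intro a ha; simp only [Finset.mem_Icc] at *; try omega)
  rw [h1, h2, Finset.prod_mul_distrib, Finset.prod_mul_distrib, h1a, h2a]
  -- now pure arithmetic in ℝ
  have hq0 : (0:ℝ) < (q:ℝ) := by exact_mod_cast hq1
  have e1 : ((q !:ℕ):ℝ) * ((∏ j ∈ Icc 1 (q-1), (q+j) : ℕ):ℝ) = (((2*q-1)! : ℕ):ℝ) := by
    exact_mod_cast congrArg (Nat.cast (R := ℝ)) h1b
  have e2 : (((2*q)! :ℕ):ℝ) * ((∏ j ∈ Icc (q+1) k, (q+j) : ℕ):ℝ) = (((k+q)! : ℕ):ℝ) := by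
    exact_mod_cast congrArg (Nat.cast (R := ℝ)) h2b
  have e3 : ((q ! : ℕ):ℝ) = q * ((q-1)! : ℕ) := by
    rw [show q = q - 1 + 1 by omega, Nat.factorial_succ]
    push_cast [show q - 1 + 1 = q by omega]
    ring
  have e4 : (((2*q)! : ℕ):ℝ) = (2*q) * (((2*q-1)! : ℕ):ℝ) := by
    rw [show 2*q = 2*q - 1 + 1 by omega, Nat.factorial_succ]
    push_cast [show 2*q - 1 + 1 = 2*q by omega]
    ring
  rw [e3] at e1
  rw [e4] at e2
  push_cast at e1 e2 ⊢
  rw [eq_div_iff (by positivity : (2 * (q:ℝ)^2) ≠ 0)]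
  linear_combination (((k-q)! : ℕ):ℝ) * e2 +
    (2*(q:ℝ)*(∏ j ∈ Icc (q+1) k, ((q:ℝ)+j)) * (((k-q)! : ℕ):ℝ)) * e1


lemma fbdd : ∀ x ∈ (fun lam : ℝ =>
    lam ^ 2 / ((1 + lam) ^ (1 + lam) * (1 - lam) ^ (1 - lam))) '' Set.Ico (0:ℝ) 1, x ≤ 3 := by
  rintro x ⟨lam, ⟨h0, h1⟩, rfl⟩
  have h1l : (0:ℝ) < 1 - lam := by linarith
  have hd1 : (1:ℝ) ≤ (1 + lam) ^ (1 + lam) := Real.one_le_rpow (by linarith) (by linarith)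
  have hd2 : Real.exp (-1) ≤ (1 - lam) ^ (1 - lam) := by
    rw [Real.rpow_def_of_pos h1l]
    apply Real.exp_le_exp.mpr
    have hlog : 1 - (1-lam)⁻¹ ≤ Real.log (1 - lam) := by
      have := Real.log_le_sub_one_of_pos (x := (1-lam)⁻¹) (by positivity)
      rw [Real.log_inv] at this
      linarith
    have h2 : (1-lam) * (1 - (1-lam)⁻¹) ≤ (1-lam) * Real.log (1-lam) :=
      mul_le_mul_of_nonneg_left hlog h1l.le
    have h3 : (1-lam) * (1 - (1-lam)⁻¹) = (1-lam) - 1 := by field_simp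
    calc (-1:ℝ) ≤ (1-lam) - 1 := by linarith
      _ = (1-lam) * (1 - (1-lam)⁻¹) := h3.symm
      _ ≤ (1-lam) * Real.log (1-lam) := h2
      _ = Real.log (1-lam) * (1-lam) := by ring
  have hnum : lam ^ 2 ≤ 1 := by nlinarith
  have hd : Real.exp (-1) ≤ (1 + lam) ^ (1 + lam) * (1 - lam) ^ (1 - lam) := by
    nlinarith [Real.exp_pos (-1), Real.rpow_pos_of_pos h1l (1-lam)]
  calc lam ^ 2 / ((1 + lam) ^ (1 + lam) * (1 - lam) ^ (1 - lam))
      ≤ 1 / Real.exp (-1) := div_le_div₀ zero_le_one hnum (Real.exp_pos _) hd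
    _ = Real.exp 1 := by rw [Real.exp_neg, one_div, inv_inv]
    _ ≤ 3 := by
        have := Real.exp_one_lt_d9
        linarith

lemma quarter_le (η : ℝ)
    (hη : η = sSup ((fun lam : ℝ =>
        lam ^ 2 / ((1 + lam) ^ (1 + lam) * (1 - lam) ^ (1 - lam))) '' Set.Ico (0 : ℝ) 1)) :
    (1:ℝ)/4 ≤ η := by
  have hmem : ((3:ℝ)/4)^2 / ((1 + 3/4) ^ ((1:ℝ) + 3/4) * (1 - 3/4) ^ ((1:ℝ) - 3/4)) ∈
      (fun lam : ℝ => lam ^ 2 / ((1 + lam) ^ (1 + lam) * (1 - lam) ^ (1 - lam))) ''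
        Set.Ico (0 : ℝ) 1 := ⟨3/4, by norm_num, by norm_num⟩
  have hle := le_csSup ⟨3, fbdd⟩ hmem
  rw [← hη] at hle
  refine le_trans ?_ hle
  -- numeric: 1/4 ≤ (9/16) / D with D^4 = (7/4)^7 * (1/4)
  have hD4 : ((1 + 3/4 : ℝ) ^ ((1:ℝ) + 3/4) * (1 - 3/4) ^ ((1:ℝ) - 3/4))^(4:ℕ)
      = ((7:ℝ)/4)^(7:ℕ) * (1/4) := by
    rw [mul_pow, ← Real.rpow_natCast ((1+3/4:ℝ) ^ ((1:ℝ)+3/4)) 4,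
        ← Real.rpow_natCast ((1-3/4:ℝ) ^ ((1:ℝ)-3/4)) 4,
        ← Real.rpow_mul (by norm_num), ← Real.rpow_mul (by norm_num)]
    norm_num
  set D := ((1 + 3/4 : ℝ) ^ ((1:ℝ) + 3/4) * (1 - 3/4) ^ ((1:ℝ) - 3/4)) with hDdef
  have hDpos : 0 < D := by
    have := Real.rpow_pos_of_pos (show (0:ℝ) < 1 + 3/4 by norm_num) ((1:ℝ)+3/4)
    have := Real.rpow_pos_of_pos (show (0:ℝ) < 1 - 3/4 by norm_num) ((1:ℝ)-3/4)
    positivity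
  have hDle : D ≤ 9/4 := by
    have h4 : D^(4:ℕ) ≤ ((9:ℝ)/4)^(4:ℕ) := by
      rw [hD4]; norm_num
    exact le_of_pow_le_pow_left₀ (by norm_num) (by norm_num) h4
  rw [le_div_iff₀ hDpos]
  nlinarith


/-- Lemma 3 of Childs–Wiebe: under `e^{2γ(k+1)} ≥ 2k²`, for `1 ≤ q ≤ k`,
`|C_q| ≤ √2 k^{3/2} e^{2k(1 + log(η)/2 - γ)}` where
`η = sup_{λ ∈ [0,1)} λ²/((1+λ)^{1+λ}(1-λ)^{1-λ})`. -/
theorem stmt_6 (k q : ℕ) (hk : 1 ≤ k) (hq1 : 1 ≤ q) (hqk : q ≤ k) (γ : ℝ) (hγ : 0 < γ)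
    (hγ2 : Real.exp (2 * γ * (k + 1)) ≥ 2 * (k : ℝ) ^ 2)
    (η : ℝ)
    (hη : η = sSup ((fun lam : ℝ =>
        lam ^ 2 / ((1 + lam) ^ (1 + lam) * (1 - lam) ^ (1 - lam))) '' Set.Ico (0 : ℝ) 1))
    (Cq : ℝ)
    (hCq : Cq = ((q : ℝ) ^ 2 / ((q : ℝ) ^ 2 - Real.exp (2 * γ * (k + 1)))) *
        ∏ j ∈ (Finset.Icc 1 k).erase q, ((q : ℝ) ^ 2) / ((q : ℝ) ^ 2 - (j : ℝ) ^ 2)) :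
    |Cq| ≤ Real.sqrt 2 * (k : ℝ) ^ ((3 : ℝ) / 2) *
        Real.exp (2 * k * (1 + Real.log η / 2 - γ)) := by
  set E := Real.exp (2 * γ * (k + 1)) with hE
  have hη4 : (1:ℝ)/4 ≤ η := quarter_le η hη
  have hη0 : (0:ℝ) < η := by linarith
  have hkR : (1:ℝ) ≤ (k:ℝ) := by exact_mod_cast hk
  have hqR : (1:ℝ) ≤ (q:ℝ) := by exact_mod_cast hq1
  have hq2pos : (0:ℝ) < (q:ℝ)^2 := by positivity
  have hq2k : (q:ℝ)^2 ≤ (k:ℝ)^2 := by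
    have : (q:ℝ) ≤ (k:ℝ) := by exact_mod_cast hqk
    nlinarith
  have hEpos : (0:ℝ) < E := Real.exp_pos _
  have hEq : (q:ℝ)^2 < E := by nlinarith
  have hEmq : (0:ℝ) < E - (q:ℝ)^2 := by linarith
  have hF2pos : (0:ℝ) < ((k-q)! : ℝ) := by exact_mod_cast Nat.factorial_pos _
  have hF3pos : (0:ℝ) < ((k+q)! : ℝ) := by exact_mod_cast Nat.factorial_pos _
  have hexp2k : (0:ℝ) < (Real.exp 1)^(2*k) := by positivity
  have hsqk : (0:ℝ) < Real.sqrt k := Real.sqrt_pos.mpr (by linarith)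
  have hk32 : Real.sqrt (k:ℝ) * (k:ℝ)^((3:ℝ)/2) = (k:ℝ)^2 := by
    rw [Real.sqrt_eq_rpow, ← Real.rpow_natCast (k:ℝ) 2, ← Real.rpow_add (by linarith)]
    norm_num
  -- |Cq| formula
  have hAbs : |Cq| = (q:ℝ)^2/(E - (q:ℝ)^2) * ((q:ℝ)^(2*k) * 2/(((k-q)! : ℝ)*((k+q)! : ℝ))) := by
    rw [hCq, abs_mul, Finset.abs_prod]
    have habs1 : |(q:ℝ)^2/((q:ℝ)^2 - E)| = (q:ℝ)^2/(E - (q:ℝ)^2) := by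
      rw [abs_div, abs_of_pos hq2pos, abs_of_neg (sub_neg.mpr hEq), neg_sub]
    have habs2 : ∏ j ∈ (Icc 1 k).erase q, |(q:ℝ)^2/((q:ℝ)^2-(j:ℝ)^2)| =
        (q:ℝ)^(2*k) * 2/(((k-q)! : ℝ)*((k+q)! : ℝ)) := by
      rw [Finset.prod_congr rfl (fun j _ => by rw [abs_div, abs_of_pos hq2pos]),
        Finset.prod_div_distrib, Finset.prod_const, prodAbs k q hq1 hqk,
        Finset.card_erase_of_mem (Finset.mem_Icc.mpr ⟨hq1, hqk⟩), Nat.card_Icc]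
      rw [div_div_eq_mul_div]
      push_cast
      rw [show ((q:ℝ)^2)^(k-1) * (2*(q:ℝ)^2) = (q:ℝ)^(2*k) * 2 by
        rw [← pow_mul, show ((q:ℝ)^(2*(k-1)) * (2*(q:ℝ)^2)) = ((q:ℝ)^(2*(k-1)) * (q:ℝ)^2)*2 by ring,
          ← pow_add, show 2*(k-1)+2 = 2*k by omega]]
    rw [habs1, habs2]
  -- step 1
  have hstep1 : |Cq| ≤ (4*(q:ℝ)^(2*k)*(q:ℝ)^2/(((k-q)! : ℝ)*((k+q)! : ℝ))) * (1/E) := by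
    rw [hAbs]
    have h1 : (q:ℝ)^2/(E-(q:ℝ)^2) ≤ 2*(q:ℝ)^2/E := by
      rw [div_le_div_iff₀ hEmq hEpos]
      nlinarith
    calc (q:ℝ)^2/(E - (q:ℝ)^2) * ((q:ℝ)^(2*k) * 2/(((k-q)! : ℝ)*((k+q)! : ℝ)))
        ≤ 2*(q:ℝ)^2/E * ((q:ℝ)^(2*k) * 2/(((k-q)! : ℝ)*((k+q)! : ℝ))) :=
          mul_le_mul_of_nonneg_right h1 (by positivity)
      _ = (4*(q:ℝ)^(2*k)*(q:ℝ)^2/(((k-q)! : ℝ)*((k+q)! : ℝ))) * (1/E) := by ring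
  -- step 3
  have hstep3 : 1/E ≤ Real.exp (-(2*γ*k)) := by
    rw [hE, one_div, ← Real.exp_neg]
    apply Real.exp_le_exp.mpr
    nlinarith
  have hππ : Real.sqrt π * Real.sqrt π = π := Real.mul_self_sqrt Real.pi_pos.le
  have hsq2 : (1:ℝ) ≤ Real.sqrt 2 := by
    rw [show (1:ℝ) = Real.sqrt 1 by simp]
    exact Real.sqrt_le_sqrt (by norm_num)
  have h2pi : (2:ℝ) ≤ Real.sqrt 2 * Real.sqrt π := by
    have h1 : Real.sqrt 4 ≤ Real.sqrt (2*π) := Real.sqrt_le_sqrt (by linarith [Real.pi_gt_three])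
    have h2 : Real.sqrt 4 = 2 := by
      rw [show (4:ℝ) = 2^2 by norm_num, Real.sqrt_sq (by norm_num : (0:ℝ) ≤ 2)]
    rw [← Real.sqrt_mul (by norm_num : (0:ℝ) ≤ 2)]
    linarith
  have h4η : (1:ℝ) ≤ 4^k * η^k := by
    rw [← mul_pow]
    exact one_le_pow₀ (by linarith)
  have hstep2 : 4*(q:ℝ)^(2*k)*(q:ℝ)^2 ≤
      (Real.sqrt 2 * (k:ℝ)^((3:ℝ)/2) * (Real.exp 1)^(2*k) * η^k) * (((k-q)! : ℝ)*((k+q)! : ℝ)) := by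
    rcases eq_or_lt_of_le hqk with hqe | hlt
    · -- q = k
      subst hqe
      have hs := fact_lb' (q+q) (by omega)
      have h2q : ((q+q:ℕ):ℝ) = 2*(q:ℝ) := by push_cast; ring
      have hsqr : Real.sqrt (2*((q+q:ℕ):ℝ)) = 2*Real.sqrt (q:ℝ) := by
        rw [h2q, show (2*(2*(q:ℝ))) = 2^2*(q:ℝ) by ring,
          Real.sqrt_mul (by norm_num : (0:ℝ) ≤ 2^2), Real.sqrt_sq (by norm_num : (0:ℝ) ≤ 2)]
      have hpw : ((q+q:ℕ):ℝ)^((q+q:ℕ)) = 4^q * (q:ℝ)^(2*q) := by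
        rw [h2q, show q+q = 2*q by ring, mul_pow, pow_mul]
        norm_num
      rw [hsqr, hpw, show q+q = 2*q by ring] at hs
      rw [Nat.sub_self, Nat.factorial_zero, Nat.cast_one]
      apply le_of_mul_le_mul_right _ hexp2k
      calc 4*(q:ℝ)^(2*q)*(q:ℝ)^2*(Real.exp 1)^(2*q)
          = 2*(1*((q:ℝ)^2*((q:ℝ)^(2*q)*(Real.exp 1)^(2*q)*2))) := by ring
        _ ≤ (Real.sqrt 2*Real.sqrt π)*((4^q*η^q)*((Real.sqrt (q:ℝ)*(q:ℝ)^((3:ℝ)/2))*((q:ℝ)^(2*q)*(Real.exp 1)^(2*q)*2))) := by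
            gcongr
            · exact hk32.ge
        _ = (Real.sqrt 2*(q:ℝ)^((3:ℝ)/2)*(Real.exp 1)^(2*q)*η^q) *
              (Real.sqrt π*(2*Real.sqrt (q:ℝ)*(4^q*(q:ℝ)^(2*q)))) := by ring
        _ ≤ (Real.sqrt 2*(q:ℝ)^((3:ℝ)/2)*(Real.exp 1)^(2*q)*η^q) *
              (((2*q)! : ℝ)*(Real.exp 1)^(2*q)) := by
            apply mul_le_mul_of_nonneg_left hs (by positivity)
        _ = (Real.sqrt 2*(q:ℝ)^((3:ℝ)/2)*(Real.exp 1)^(2*q)*η^q) * (1*((q+q)! : ℝ)) *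
              (Real.exp 1)^(2*q) := by
            rw [show q+q = 2*q by ring]
            ring
    · -- q < k
      have hkq1 : (1:ℝ) ≤ ((k-q:ℕ):ℝ) := by
        have : 1 ≤ k - q := by omega
        exact_mod_cast this
      have hkb : (k:ℝ) ≤ ((k+q:ℕ):ℝ) := by push_cast; linarith
      have hfη : ((q:ℝ)/k) ^ 2 /
          ((1 + (q:ℝ)/k) ^ (1 + (q:ℝ)/k) * (1 - (q:ℝ)/k) ^ (1 - (q:ℝ)/k)) ≤ η := by
        rw [hη]
        apply le_csSup ⟨3, fbdd⟩
        refine ⟨(q:ℝ)/k, ⟨by positivity, ?_⟩, rfl⟩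
        rw [div_lt_one (by linarith)]
        exact_mod_cast hlt
      have hkey := keypow k q hq1 hlt η hfη
      have hs2 := fact_lb' (k-q) (by omega)
      have hs3 := fact_lb' (k+q) (by omega)
      have hsa : Real.sqrt 2 ≤ Real.sqrt (2*((k-q:ℕ):ℝ)) := by
        apply Real.sqrt_le_sqrt
        linarith [hkq1]
      have hsb : Real.sqrt (2*(k:ℝ)) ≤ Real.sqrt (2*((k+q:ℕ):ℝ)) := by
        apply Real.sqrt_le_sqrt
        linarith [hkb]
      have h2k : Real.sqrt 2 * Real.sqrt (2*(k:ℝ)) = 2*Real.sqrt (k:ℝ) := by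
        rw [Real.sqrt_mul (by norm_num : (0:ℝ) ≤ 2), ← mul_assoc,
          Real.mul_self_sqrt (by norm_num : (0:ℝ) ≤ 2)]
      have hee : (Real.exp 1)^(k-q)*(Real.exp 1)^(k+q) = (Real.exp 1)^(2*k) := by
        rw [← pow_add]
        congr 1
        omega
      apply le_of_mul_le_mul_right _ hexp2k
      calc 4*(q:ℝ)^(2*k)*(q:ℝ)^2*(Real.exp 1)^(2*k)
          = (4*(q:ℝ)^2)*((q:ℝ)^(2*k)*(Real.exp 1)^(2*k)) := by ring
        _ ≤ (Real.sqrt 2*2*π*(k:ℝ)^2)*((q:ℝ)^(2*k)*(Real.exp 1)^(2*k)) := by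
            apply mul_le_mul_of_nonneg_right _ (by positivity)
            have hπb : (3:ℝ) ≤ π := Real.pi_gt_three.le
            calc 4*(q:ℝ)^2 ≤ 1*(2*(3*(k:ℝ)^2)) := by
                  linarith [hq2k, sq_nonneg (k:ℝ)]
              _ ≤ Real.sqrt 2*(2*(π*(k:ℝ)^2)) := by gcongr
              _ = Real.sqrt 2*2*π*(k:ℝ)^2 := by ring
        _ = (Real.sqrt 2*(Real.sqrt π*Real.sqrt π))*((Real.sqrt 2*Real.sqrt (2*(k:ℝ)))*
              ((k:ℝ)^((3:ℝ)/2)*((q:ℝ)^(2*k)*(Real.exp 1)^(2*k)))) := by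
            rw [hππ, h2k]
            linear_combination (Real.sqrt 2*2*π*((q:ℝ)^(2*k)*(Real.exp 1)^(2*k))) * hk32.symm
        _ ≤ (Real.sqrt 2*(Real.sqrt π*Real.sqrt π))*((Real.sqrt (2*((k-q:ℕ):ℝ))*Real.sqrt (2*((k+q:ℕ):ℝ)))*
              ((k:ℝ)^((3:ℝ)/2)*((η^k*(((k-q:ℕ):ℝ)^((k-q:ℕ))*((k+q:ℕ):ℝ)^((k+q:ℕ))))*(Real.exp 1)^(2*k)))) := by
            refine mul_le_mul_of_nonneg_left ?_ (by positivity)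
            refine mul_le_mul (mul_le_mul hsa hsb (by positivity) (Real.sqrt_nonneg _)) ?_
              (by positivity) (by positivity)
            exact mul_le_mul_of_nonneg_left
              (mul_le_mul_of_nonneg_right hkey (by positivity)) (by positivity)
        _ = (Real.sqrt 2*(k:ℝ)^((3:ℝ)/2)*(Real.exp 1)^(2*k)*η^k) *
              ((Real.sqrt π*(Real.sqrt (2*((k-q:ℕ):ℝ))*((k-q:ℕ):ℝ)^((k-q:ℕ)))) *
               (Real.sqrt π*(Real.sqrt (2*((k+q:ℕ):ℝ))*((k+q:ℕ):ℝ)^((k+q:ℕ))))) := by ring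
        _ ≤ (Real.sqrt 2*(k:ℝ)^((3:ℝ)/2)*(Real.exp 1)^(2*k)*η^k) *
              ((((k-q)! : ℝ)*(Real.exp 1)^(k-q)) * (((k+q)! : ℝ)*(Real.exp 1)^(k+q))) := by
            refine mul_le_mul_of_nonneg_left (mul_le_mul hs2 hs3 (by positivity) (by positivity))
              (mul_nonneg (by positivity) (pow_nonneg hη0.le k))
        _ = (Real.sqrt 2*(k:ℝ)^((3:ℝ)/2)*(Real.exp 1)^(2*k)*η^k) * (((k-q)! : ℝ)*((k+q)! : ℝ)) *
              (Real.exp 1)^(2*k) := by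
            rw [← hee]
            ring
  -- RHS decomposition
  have hRHS : Real.sqrt 2 * (k : ℝ) ^ ((3 : ℝ) / 2) * Real.exp (2 * k * (1 + Real.log η / 2 - γ))
      = (Real.sqrt 2 * (k:ℝ)^((3:ℝ)/2) * (Real.exp 1)^(2*k) * η^k) * Real.exp (-(2*γ*k)) := by
    rw [show (2*(k:ℝ)*(1+Real.log η/2-γ)) = (2*k)*1 + ((k:ℝ)*Real.log η + (-(2*γ*k))) by ring,
      Real.exp_add, Real.exp_add]
    rw [show ((2*(k:ℝ))*1) = ((2*k:ℕ):ℝ)*1 by push_cast; ring, Real.exp_nat_mul,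
      show ((k:ℝ)*Real.log η) = ((k:ℕ):ℝ)*Real.log η from rfl, Real.exp_nat_mul,
      Real.exp_log hη0]
    ring
  -- combine
  have hpos2 : (0:ℝ) < 4*(q:ℝ)^(2*k)*(q:ℝ)^2 := by positivity
  calc |Cq| ≤ (4*(q:ℝ)^(2*k)*(q:ℝ)^2/(((k-q)! : ℝ)*((k+q)! : ℝ))) * (1/E) := hstep1
    _ ≤ ((Real.sqrt 2 * (k:ℝ)^((3:ℝ)/2) * (Real.exp 1)^(2*k) * η^k)) * (1/E) := by
        apply mul_le_mul_of_nonneg_right _ (by positivity)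
        rw [div_le_iff₀ (by positivity)]
        exact hstep2
    _ ≤ ((Real.sqrt 2 * (k:ℝ)^((3:ℝ)/2) * (Real.exp 1)^(2*k) * η^k)) * Real.exp (-(2*γ*k)) := by
        apply mul_le_mul_of_nonneg_left hstep3 (by positivity)
    _ = Real.sqrt 2 * (k : ℝ) ^ ((3 : ℝ) / 2) * Real.exp (2 * k * (1 + Real.log η / 2 - γ)) :=
        hRHS.symm
end

section
/- Let $H_1, \ldots, H_M$ be Hermitian $N \times N$ matrices with $\|H_j\| \leq h$, let $a_1, \ldots, a_M \in \mathbb{R}$, and let $t \geq 0$. Then the tail of the Taylor series (in $t$) of $\prod_{j=1}^M e^{-i a_j H_j t}$ beyond order $\ell$ has operator norm at most $\frac{(\sum_{j=1}^M |a_j| h t)^{\ell+1}}{(\ell+1)!} \exp\left(\sum_{j=1}^M |a_j| h t\right)$. -/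
open NormedSpace
variable {E : Type*} [NormedAddCommGroup E] [NormedSpace ℂ E] [CompleteSpace E]

theorem aux_sum_antidiag (n : ℕ) (x y : ℝ) :
    ∑ kl ∈ Finset.HasAntidiagonal.antidiagonal n, x ^ kl.1 / kl.1.factorial * (y ^ kl.2 / kl.2.factorial)
      = (x + y) ^ n / n.factorial := by
  rw [Finset.Nat.sum_antidiagonal_eq_sum_range_succ_mk, add_pow]
  rw [Finset.sum_div]
  refine Finset.sum_congr rfl fun k hk => ?_
  have hkn : k ≤ n := Nat.lt_succ_iff.mp (Finset.mem_range.mp hk)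
  have hfac : (n.choose k : ℝ) * k.factorial * (n - k).factorial = n.factorial := by
    exact_mod_cast congrArg (Nat.cast (R := ℝ)) (Nat.choose_mul_factorial_mul_factorial hkn)
  have h1 : (k.factorial : ℝ) ≠ 0 := Nat.cast_ne_zero.mpr k.factorial_ne_zero
  have h2 : ((n-k).factorial : ℝ) ≠ 0 := Nat.cast_ne_zero.mpr (n-k).factorial_ne_zero
  have h3 : (n.factorial : ℝ) ≠ 0 := Nat.cast_ne_zero.mpr n.factorial_ne_zero
  field_simp
  rw [← hfac]
  ring


theorem aux_smul_norm_le (s : ℝ) (n : ℕ) (g : E →L[ℂ] E) :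
    ‖s ^ n • g‖ ≤ |s| ^ n * ‖g‖ := by
  have : ‖s ^ n • g‖ = ‖s ^ n‖ * ‖g‖ := norm_smul (s ^ n) g
  rw [this, Real.norm_eq_abs, abs_pow]

theorem aux_smulC_norm (c : ℂ) (T : E →L[ℂ] E) : ‖c • T‖ = ‖c‖ * ‖T‖ := norm_smul c T

theorem aux_inv_fact_smul_norm_le (h1 : ‖(1 : E →L[ℂ] E)‖ ≤ 1) (B : E →L[ℂ] E) (k : ℕ) :
    ‖((k.factorial : ℝ))⁻¹ • B ^ k‖ ≤ ‖B‖ ^ k / k.factorial := by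
  have : ‖((k.factorial : ℝ))⁻¹ • B ^ k‖ = ‖((k.factorial : ℝ))⁻¹‖ * ‖B ^ k‖ :=
    norm_smul ((k.factorial : ℝ))⁻¹ (B ^ k)
  rw [this, Real.norm_eq_abs, abs_inv, Nat.abs_cast, inv_mul_eq_div]
  have hB : ‖B ^ k‖ ≤ ‖B‖ ^ k := by
    cases k with
    | zero => simpa using h1
    | succ m => exact norm_pow_le' B m.succ_pos
  gcongr


/-- Taylor coefficients of `s ↦ ∏ exp (s • B)` over a list of elements. -/
noncomputable def expCoef : List (E →L[ℂ] E) → ℕ → (E →L[ℂ] E)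
  | [], n => if n = 0 then 1 else 0
  | B :: L, n => ∑ kl ∈ Finset.HasAntidiagonal.antidiagonal n,
      (((kl.1.factorial : ℝ))⁻¹ • B ^ kl.1) * expCoef L kl.2

theorem expCoef_norm_le (h1 : ‖(1:(E →L[ℂ] E))‖ ≤ 1) (L : List (E →L[ℂ] E)) (n : ℕ) :
    ‖expCoef L n‖ ≤ (L.map norm).sum ^ n / n.factorial := by
  induction L generalizing n with
  | nil =>
    rcases eq_or_ne n 0 with rfl | hn
    · simpa [expCoef] using h1
    · simp [expCoef, hn, le_div_iff₀, Nat.cast_pos.mpr n.factorial_pos]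
  | cons B L ih =>
    simp only [expCoef, List.map_cons, List.sum_cons]
    calc ‖∑ kl ∈ Finset.HasAntidiagonal.antidiagonal n, (((kl.1.factorial : ℝ))⁻¹ • B ^ kl.1) * expCoef L kl.2‖
        ≤ ∑ kl ∈ Finset.HasAntidiagonal.antidiagonal n,
            ‖B‖ ^ kl.1 / kl.1.factorial * ((L.map norm).sum ^ kl.2 / kl.2.factorial) := by
          refine (norm_sum_le _ _).trans (Finset.sum_le_sum fun kl _ => ?_)
          refine (norm_mul_le _ _).trans ?_
          exact mul_le_mul (aux_inv_fact_smul_norm_le h1 B kl.1) (ih kl.2)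
            (norm_nonneg _) (by positivity)
      _ = (‖B‖ + (L.map norm).sum) ^ n / n.factorial := aux_sum_antidiag n _ _


-- summability of the coefficient series, given norm bound
theorem aux_summable_norm {c : ℝ} (hc : 0 ≤ c) (g : ℕ → (E →L[ℂ] E))
    (hg : ∀ n, ‖g n‖ ≤ c ^ n / n.factorial) (s : ℝ) :
    Summable fun n => ‖s ^ n • g n‖ := by
  refine Summable.of_nonneg_of_le (fun n => norm_nonneg _) (fun n => ?_)
    (Real.summable_pow_div_factorial (|s| * c))
  refine (aux_smul_norm_le s n (g n)).trans ?_
  rw [mul_pow, mul_div_assoc]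
  have := hg n
  gcongr

-- single exponential HasSum
theorem aux_exp_hasSum (B : (E →L[ℂ] E)) (s : ℝ) :
    HasSum (fun n => s ^ n • ((n.factorial : ℝ))⁻¹ • B ^ n) (exp (s • B)) := by
  have h := NormedSpace.expSeries_hasSum_exp (𝕂 := ℂ) (s • B)
  have heq : ∀ n, (expSeries ℂ (E →L[ℂ] E) n fun _ => s • B) = s ^ n • ((n.factorial : ℝ))⁻¹ • B ^ n := by
    intro n
    rw [NormedSpace.expSeries_apply_eq, smul_pow]
    rw [smul_comm]
    congr 1
    rw [← Complex.coe_smul]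
    push_cast
    rfl
  simpa only [heq] using h

theorem aux_list_norm_sum_nonneg (L : List (E →L[ℂ] E)) : 0 ≤ (L.map norm).sum :=
  List.sum_nonneg fun x hx => by
    obtain ⟨B, _, rfl⟩ := List.mem_map.mp hx; exact norm_nonneg B

theorem expCoef_hasSum (h1 : ‖(1:(E →L[ℂ] E))‖ ≤ 1) (L : List (E →L[ℂ] E)) (s : ℝ) :
    HasSum (fun n => s ^ n • expCoef L n)
      ((L.map fun B => exp (s • B)).prod) := by
  induction L with
  | nil =>
    simp only [List.map_nil, List.prod_nil]
    have : (fun n => s ^ n • expCoef ([] : List (E →L[ℂ] E)) n)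
        = fun n => if n = 0 then (1 : (E →L[ℂ] E)) else 0 := by
      funext n
      cases n <;> simp [expCoef]
    rw [this]
    simpa using hasSum_ite_eq 0 (1 : (E →L[ℂ] E))
  | cons B L ih =>
    simp only [List.map_cons, List.prod_cons]
    -- summable norms
    have hsumB : Summable fun n => ‖s ^ n • ((n.factorial : ℝ))⁻¹ • B ^ n‖ := by
      exact aux_summable_norm (norm_nonneg B) _ (aux_inv_fact_smul_norm_le h1 B) s
    have hsumL : Summable fun n => ‖s ^ n • expCoef L n‖ :=
      aux_summable_norm (aux_list_norm_sum_nonneg L) _ (expCoef_norm_le h1 L) s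
    -- Cauchy product
    have hc := tsum_mul_tsum_eq_tsum_sum_antidiagonal_of_summable_norm hsumB hsumL
    have hsum2 : Summable fun n => s ^ n • expCoef (B :: L) n := by
      exact Summable.of_norm (aux_summable_norm (aux_list_norm_sum_nonneg (B :: L)) _ (expCoef_norm_le h1 (B :: L)) s)
    have hkey : ∀ n, ∑ kl ∈ Finset.HasAntidiagonal.antidiagonal n,
        (s ^ kl.1 • ((kl.1.factorial : ℝ))⁻¹ • B ^ kl.1) * (s ^ kl.2 • expCoef L kl.2)
        = s ^ n • expCoef (B :: L) n := by
      intro n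
      show _ = s ^ n • ∑ kl ∈ Finset.HasAntidiagonal.antidiagonal n, _
      rw [Finset.smul_sum]
      refine Finset.sum_congr rfl fun kl hkl => ?_
      rw [smul_mul_assoc, mul_smul_comm, smul_smul, ← pow_add,
        (Finset.HasAntidiagonal.mem_antidiagonal.mp hkl)]
    rw [(aux_exp_hasSum B s).tsum_eq, ih.tsum_eq] at hc
    simp_rw [hkey] at hc
    rw [hc]
    exact hsum2.hasSum

open scoped BigOperators

set_option maxHeartbeats 2000000 in
set_option synthInstance.maxHeartbeats 1000000 in
/-- Tail bound for the Taylor series of a finite product of exponentials. -/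
theorem aux_final (L : List (E →L[ℂ] E)) (f : ℝ → (E →L[ℂ] E))
    (hf : f = fun s : ℝ => (L.map fun B => exp (s • B)).prod)
    {r t : ℝ} (ht : 0 ≤ t) (hct : (L.map norm).sum * t ≤ r) (ℓ : ℕ) :
    ‖f t - ∑ p ∈ Finset.range (ℓ + 1), (t ^ p / (p.factorial : ℝ)) • iteratedDeriv p f 0‖
      ≤ r ^ (ℓ + 1) / ((ℓ + 1).factorial : ℝ) * Real.exp r := by
  have h1 : ‖(1 : E →L[ℂ] E)‖ ≤ 1 := ContinuousLinearMap.norm_id_le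
  set c : ℝ := (L.map norm).sum with hc
  have hc0 : 0 ≤ c := aux_list_norm_sum_nonneg L
  have hr0 : 0 ≤ r := le_trans (mul_nonneg hc0 ht) hct
  set q : FormalMultilinearSeries ℝ ℝ (E →L[ℂ] E) :=
    fun n => ContinuousMultilinearMap.mkPiRing ℝ (Fin n) (expCoef L n) with hq
  have hqn : ∀ n, ‖q n‖ = ‖expCoef L n‖ := fun n =>
    ContinuousMultilinearMap.norm_mkPiRing _
  have hqs : HasFPowerSeriesOnBall f q 0 1 := by
    refine ⟨?_, one_pos, fun {y} _ => ?_⟩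
    · have hsummable : Summable fun n => ‖q n‖ * (1:ℝ) ^ n := by
        simp only [one_pow, mul_one, hqn]
        exact Summable.of_nonneg_of_le (fun n => norm_nonneg _)
          (expCoef_norm_le h1 L) (Real.summable_pow_div_factorial c)
      have := q.le_radius_of_summable (r := 1) (by simpa using hsummable)
      simpa using this
    · have : ∀ n, q n (fun _ => y) = y ^ n • expCoef L n := by
        intro n; simp [hq, ContinuousMultilinearMap.mkPiRing_apply]
      simp only [this, zero_add, hf]
      exact expCoef_hasSum h1 L y
  have hderiv : ∀ p : ℕ, iteratedDeriv p f 0 = p.factorial • expCoef L p := by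
    intro p
    rw [iteratedDeriv_eq_iteratedFDeriv]
    have := hqs.factorial_smul (1 : ℝ) p
    rw [← this, hq]
    simp [ContinuousMultilinearMap.mkPiRing_apply]
  have hterm : ∀ p : ℕ, (t ^ p / (p.factorial : ℝ)) • iteratedDeriv p f 0
      = t ^ p • expCoef L p := by
    intro p
    rw [hderiv]
    have : (p.factorial : ℕ) • expCoef L p = ((p.factorial : ℝ)) • expCoef L p :=
      (Nat.cast_smul_eq_nsmul ℝ _ _).symm
    rw [this, smul_smul, div_mul_cancel₀]
    exact Nat.cast_ne_zero.mpr p.factorial_ne_zero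
  have hsumt : Summable fun n => t ^ n • expCoef L n :=
    Summable.of_norm (aux_summable_norm hc0 _ (expCoef_norm_le h1 L) t)
  have hft : f t = ∑' n, t ^ n • expCoef L n := by
    rw [hf]
    exact (expCoef_hasSum h1 L t).tsum_eq.symm
  have htail := hsumt.sum_add_tsum_nat_add (ℓ + 1)
  have hrem : f t - ∑ p ∈ Finset.range (ℓ + 1),
      (t ^ p / (p.factorial : ℝ)) • iteratedDeriv p f 0
      = ∑' i, t ^ (i + (ℓ + 1)) • expCoef L (i + (ℓ + 1)) := by
    simp only [hterm]
    rw [hft, ← htail]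
    abel
  rw [hrem]
  have hnorm : Summable fun n => ‖t ^ n • expCoef L n‖ :=
    aux_summable_norm hc0 _ (expCoef_norm_le h1 L) t
  have hnorm' : Summable fun i => ‖t ^ (i + (ℓ + 1)) • expCoef L (i + (ℓ + 1))‖ :=
    (summable_nat_add_iff (ℓ + 1)).mpr hnorm
  have hbd : ∀ i : ℕ, ‖t ^ (i + (ℓ + 1)) • expCoef L (i + (ℓ + 1))‖
      ≤ r ^ (ℓ + 1) / ((ℓ + 1).factorial : ℝ) * (r ^ i / (i.factorial : ℝ)) := by
    intro i
    set n := i + (ℓ + 1) with hn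
    calc ‖t ^ n • expCoef L n‖ ≤ |t| ^ n * (c ^ n / n.factorial) := by
          refine (aux_smul_norm_le t n _).trans ?_
          exact mul_le_mul_of_nonneg_left (expCoef_norm_le h1 L n)
            (pow_nonneg (abs_nonneg t) n)
      _ = (c * t) ^ n / n.factorial := by
          rw [abs_of_nonneg ht]
          ring
      _ ≤ r ^ n / n.factorial := by
          have h0 : 0 ≤ c * t := mul_nonneg hc0 ht
          gcongr
      _ ≤ r ^ (ℓ + 1) / ((ℓ + 1).factorial : ℝ) * (r ^ i / (i.factorial : ℝ)) := by
          rw [div_mul_div_comm, ← pow_add]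
          rw [hn, add_comm i (ℓ + 1)]
          apply div_le_div_of_nonneg_left ?_ ?_ ?_ |>.trans_eq rfl
          · exact pow_nonneg hr0 _
          · positivity
          · exact_mod_cast Nat.le_of_dvd (ℓ + 1 + i).factorial_pos
              (by simpa [add_comm] using Nat.factorial_mul_factorial_dvd_factorial_add (ℓ+1) i)
  calc ‖∑' i, t ^ (i + (ℓ + 1)) • expCoef L (i + (ℓ + 1))‖
      ≤ ∑' i, ‖t ^ (i + (ℓ + 1)) • expCoef L (i + (ℓ + 1))‖ := norm_tsum_le_tsum_norm hnorm'
    _ ≤ ∑' i, r ^ (ℓ + 1) / ((ℓ + 1).factorial : ℝ) * (r ^ i / (i.factorial : ℝ)) :=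
        Summable.tsum_le_tsum hbd hnorm' ((Real.summable_pow_div_factorial r).mul_left _)
    _ = r ^ (ℓ + 1) / ((ℓ + 1).factorial : ℝ) * Real.exp r := by
        rw [tsum_mul_left, Real.exp_eq_exp_ℝ, exp_eq_tsum_div]

open scoped BigOperators

set_option maxHeartbeats 1000000 in
/-- Lemma 6 of Childs–Wiebe: for self-adjoint operators `H j` with `‖H j‖ ≤ h`,
reals `a j`, and `t ≥ 0`, the Taylor remainder (beyond order `ℓ`) of
`t ↦ ∏ⱼ e^{-i a_j H_j t}` at `0` has norm at most
`(∑ⱼ |a_j| h t)^{ℓ+1}/(ℓ+1)! · exp(∑ⱼ |a_j| h t)`. -/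
theorem stmt_11 (N M : ℕ)
    (H : Fin M → (EuclideanSpace ℂ (Fin N) →L[ℂ] EuclideanSpace ℂ (Fin N)))
    (hH : ∀ j, IsSelfAdjoint (H j)) (h : ℝ) (hHh : ∀ j, ‖H j‖ ≤ h)
    (a : Fin M → ℝ) (t : ℝ) (ht : 0 ≤ t) (ℓ : ℕ)
    (f : ℝ → (EuclideanSpace ℂ (Fin N) →L[ℂ] EuclideanSpace ℂ (Fin N)))
    (hf : f = fun s : ℝ =>
      (List.ofFn fun j : Fin M =>
        NormedSpace.exp ((-(Complex.I) * (a j : ℂ) * ((s : ℝ) : ℂ)) • H j)).prod) :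
    ‖f t - ∑ p ∈ Finset.range (ℓ + 1), (t ^ p / (p.factorial : ℝ)) • iteratedDeriv p f 0‖
      ≤ (∑ j, |a j| * h * t) ^ (ℓ + 1) / ((ℓ + 1).factorial : ℝ) *
          Real.exp (∑ j, |a j| * h * t) := by
  set B : Fin M → (EuclideanSpace ℂ (Fin N) →L[ℂ] EuclideanSpace ℂ (Fin N)) :=
    fun j => (-(Complex.I) * (a j : ℂ)) • H j with hB
  set L : List (EuclideanSpace ℂ (Fin N) →L[ℂ] EuclideanSpace ℂ (Fin N)) := List.ofFn B with hL
  have hkey : ∀ (s : ℝ) (j : Fin M),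
      (-Complex.I * (a j : ℂ) * (s : ℂ)) • H j = s • ((-Complex.I * (a j : ℂ)) • H j) := by
    intro s j
    rw [← Complex.coe_smul s ((-Complex.I * (a j : ℂ)) • H j), smul_smul]
    ring_nf
  have hstep : ∀ s : ℝ,
      (List.ofFn fun j : Fin M => exp ((-Complex.I * (a j : ℂ) * (s : ℂ)) • H j))
        = List.map (fun B => exp (s • B)) L := by
    intro s
    rw [hL, List.map_ofFn]
    exact congrArg List.ofFn (funext fun j => congrArg (exp) (hkey s j))
  have hfL : f = fun s : ℝ => (L.map fun B => exp (s • B)).prod := by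
    rw [hf]
    funext s
    rw [hstep s]
  have hct : (L.map norm).sum * t ≤ ∑ j, |a j| * h * t := by
    rw [hL, List.map_ofFn, List.sum_ofFn, Finset.sum_mul]
    refine Finset.sum_le_sum fun j _ => ?_
    have hBj : ‖B j‖ ≤ |a j| * h := by
      have h1' : ‖(-Complex.I * (a j : ℂ)) • H j‖ = ‖-Complex.I * (a j : ℂ)‖ * ‖H j‖ :=
        aux_smulC_norm _ _
      have h2' : ‖-Complex.I * (a j : ℂ)‖ = |a j| := by simp
      rw [hB]
      simp only
      rw [h1', h2']
      exact mul_le_mul_of_nonneg_left (hHh j) (abs_nonneg _)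
    exact mul_le_mul_of_nonneg_right hBj ht
  exact aux_final L f hfL ht hct ℓ
end
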